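/- Let a, d, K > 0 be real constants, let f : ℝ → ℝ be differentiable and nonnegative on [0, ∞), and let g : ℝ → ℝ be continuous and nonnegative on [0, ∞). Assume f′(t) + 2d·g(t) ≤ K for all t ≥ 0 and f(t) ≤ e^{−at}·f(0) + K/a for all t ≥ 0. Then for every t ≥ 0, d·∫₀ᵗ e^{s}·g(s) ds ≤ (1 + 1/a)·K·e^{t} + (1 + e^{t}·∫₀ᵗ e^{(1−a)s} ds)·f(0). -/

import Mathlib

/-- Abstract exponentially weighted integral estimate (inequality (2.28)):
if f ≥ 0, g ≥ 0, f′ + 2d·g ≤ K and f(t) ≤ e^{−at}f(0) + K/a on [0, ∞), then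
d·∫₀ᵗ eˢ·g(s) ds ≤ (1 + 1/a)·K·eᵗ + (1 + eᵗ·∫₀ᵗ e^{(1−a)s} ds)·f(0). -/
theorem weighted_integral_estimate
    (a d K : ℝ) (ha : 0 < a) (hd : 0 < d) (hK : 0 < K)
    (f f' g : ℝ → ℝ)
    (hf : ∀ t ≥ 0, HasDerivAt f (f' t) t)
    (hfpos : ∀ t ≥ 0, 0 ≤ f t)
    (hg : ContinuousOn g (Set.Ici 0))
    (hgpos : ∀ t ≥ 0, 0 ≤ g t)
    (hineq : ∀ t ≥ 0, f' t + 2 * d * g t ≤ K)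
    (hdecay : ∀ t ≥ 0, f t ≤ Real.exp (-a * t) * f 0 + K / a) :
    ∀ t ≥ 0,
      d * ∫ s in (0:ℝ)..t, Real.exp s * g s
        ≤ (1 + 1/a) * K * Real.exp t
          + (1 + Real.exp t * ∫ s in (0:ℝ)..t, Real.exp ((1 - a) * s)) * f 0 := by
  intro t ht
  have hsub : Set.Icc (0:ℝ) t ⊆ Set.Ici 0 := Set.Icc_subset_Ici_self
  have huIcc : Set.uIcc (0:ℝ) t = Set.Icc 0 t := Set.uIcc_of_le ht
  have hfcOn : ContinuousOn f (Set.Ici 0) := fun s hs =>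
    ((hf s hs).continuousAt).continuousWithinAt
  -- integrands
  have hcg : ContinuousOn (fun s => Real.exp s * g s) (Set.Icc 0 t) :=
    Real.continuous_exp.continuousOn.mul (hg.mono hsub)
  have hcf : ContinuousOn (fun s => Real.exp s * (K + f s)) (Set.Icc 0 t) :=
    Real.continuous_exp.continuousOn.mul (continuousOn_const.add (hfcOn.mono hsub))
  have hig : IntervalIntegrable (fun s => Real.exp s * g s) MeasureTheory.volume 0 t := by
    apply ContinuousOn.intervalIntegrable; rwa [huIcc]
  have hif : IntervalIntegrable (fun s => Real.exp s * (K + f s)) MeasureTheory.volume 0 t := by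
    apply ContinuousOn.intervalIntegrable; rwa [huIcc]
  set G1 : ℝ → ℝ := fun u => ∫ s in (0:ℝ)..u, Real.exp s * g s with hG1def
  set G2 : ℝ → ℝ := fun u => ∫ s in (0:ℝ)..u, Real.exp s * (K + f s) with hG2def
  set H : ℝ → ℝ := fun u => Real.exp u * f u + 2 * d * G1 u - G2 u with hHdef
  -- H is continuous on [0, t]
  have hHcont : ContinuousOn H (Set.Icc 0 t) := by
    apply ContinuousOn.sub
    · apply ContinuousOn.add
      · exact Real.continuous_exp.continuousOn.mul (hfcOn.mono hsub)
      · apply continuousOn_const.mul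
        have := intervalIntegral.continuousOn_primitive_interval
          (μ := MeasureTheory.volume) (f := fun s => Real.exp s * g s) (a := 0) (b := t)
          (by rw [huIcc]; exact hcg.integrableOn_compact isCompact_Icc)
        rwa [huIcc] at this
    · have := intervalIntegral.continuousOn_primitive_interval
        (μ := MeasureTheory.volume) (f := fun s => Real.exp s * (K + f s)) (a := 0) (b := t)
        (by rw [huIcc]; exact hcf.integrableOn_compact isCompact_Icc)
      rwa [huIcc] at this
  -- H has nonpositive derivative on (0, t)
  have hHderiv : ∀ x ∈ Set.Ioo (0:ℝ) t,
      HasDerivAt H (Real.exp x * (f' x + 2 * d * g x - K)) x := by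
    intro x hx
    have hx0 : (0:ℝ) < x := hx.1
    have hxI : x ∈ Set.Ici (0:ℝ) := le_of_lt hx0
    have hgx : ContinuousAt g x := hg.continuousAt (Ici_mem_nhds hx0)
    have hfx : ContinuousAt f x := (hf x hxI).continuousAt
    have higx : IntervalIntegrable (fun s => Real.exp s * g s) MeasureTheory.volume 0 x :=
      hig.mono_set (by rw [Set.uIcc_of_le (le_of_lt hx0), huIcc]; exact Set.Icc_subset_Icc_right hx.2.le)
    have hifx : IntervalIntegrable (fun s => Real.exp s * (K + f s)) MeasureTheory.volume 0 x :=
      hif.mono_set (by rw [Set.uIcc_of_le (le_of_lt hx0), huIcc]; exact Set.Icc_subset_Icc_right hx.2.le)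
    have hcg1 : ContinuousAt (fun s => Real.exp s * g s) x :=
      (Real.continuous_exp.continuousAt).mul hgx
    have hcf1 : ContinuousAt (fun s => Real.exp s * (K + f s)) x :=
      (Real.continuous_exp.continuousAt).mul (continuousAt_const.add hfx)
    have hmg : StronglyMeasurableAtFilter (fun s => Real.exp s * g s) (nhds x)
        MeasureTheory.volume :=
      ContinuousOn.stronglyMeasurableAtFilter isOpen_Ioi
        (Real.continuous_exp.continuousOn.mul (hg.mono Set.Ioi_subset_Ici_self)) x hx0
    have hmf : StronglyMeasurableAtFilter (fun s => Real.exp s * (K + f s)) (nhds x)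
        MeasureTheory.volume :=
      ContinuousOn.stronglyMeasurableAtFilter isOpen_Ioi
        (Real.continuous_exp.continuousOn.mul
          (continuousOn_const.add (hfcOn.mono Set.Ioi_subset_Ici_self))) x hx0
    have hd1 : HasDerivAt G1 (Real.exp x * g x) x :=
      intervalIntegral.integral_hasDerivAt_right higx hmg hcg1
    have hd2 : HasDerivAt G2 (Real.exp x * (K + f x)) x :=
      intervalIntegral.integral_hasDerivAt_right hifx hmf hcf1
    have hd0 : HasDerivAt (fun u => Real.exp u * f u)
        (Real.exp x * f x + Real.exp x * f' x) x := by
      exact (Real.hasDerivAt_exp x).mul (hf x hxI)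
    have := (hd0.add (hd1.const_mul (2 * d))).sub hd2
    refine this.congr_deriv ?_
    ring
  have hanti : AntitoneOn H (Set.Icc 0 t) := by
    apply antitoneOn_of_deriv_nonpos (convex_Icc 0 t) hHcont
    · intro x hx
      rw [interior_Icc] at hx
      exact ((hHderiv x hx).differentiableAt).differentiableWithinAt
    · intro x hx
      rw [interior_Icc] at hx
      rw [(hHderiv x hx).deriv]
      have h1 := hineq x (le_of_lt hx.1)
      have h2 := (Real.exp_pos x).le
      nlinarith [Real.exp_pos x]
  have hH0 : H 0 = f 0 := by
    simp [hHdef, hG1def, hG2def]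
  have hHt : H t ≤ f 0 := by
    rcases eq_or_lt_of_le ht with h | h
    · rw [← h, hH0]
    · rw [← hH0]
      exact hanti (Set.left_mem_Icc.2 ht) (Set.mem_Icc.2 ⟨ht, le_refl t⟩) ht
  -- bound G2 t
  set J : ℝ := ∫ s in (0:ℝ)..t, Real.exp ((1 - a) * s) with hJdef
  have hiRHS : IntervalIntegrable (fun s => f 0 * Real.exp ((1 - a) * s) + (1 + 1/a) * K * Real.exp s)
      MeasureTheory.volume 0 t := by
    apply Continuous.intervalIntegrable
    exact (continuous_const.mul (Real.continuous_exp.comp (continuous_const.mul continuous_id))).add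
      (continuous_const.mul Real.continuous_exp)
  have hG2le : G2 t ≤ f 0 * J + (1 + 1/a) * K * (Real.exp t - 1) := by
    have hmono : G2 t ≤ ∫ s in (0:ℝ)..t,
        (f 0 * Real.exp ((1 - a) * s) + (1 + 1/a) * K * Real.exp s) := by
      apply intervalIntegral.integral_mono_on ht hif hiRHS
      intro s hs
      have hds := hdecay s hs.1
      have hexp : Real.exp s * Real.exp (-a * s) = Real.exp ((1 - a) * s) := by
        rw [← Real.exp_add]; ring_nf
      have hes := (Real.exp_pos s).le
      calc Real.exp s * (K + f s) ≤ Real.exp s * (K + (Real.exp (-a * s) * f 0 + K / a)) := by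
            apply mul_le_mul_of_nonneg_left _ hes
            linarith
        _ = f 0 * (Real.exp s * Real.exp (-a * s)) + (1 + 1/a) * K * Real.exp s := by
            field_simp; ring
        _ = f 0 * Real.exp ((1 - a) * s) + (1 + 1/a) * K * Real.exp s := by rw [hexp]
    have hsplit : (∫ s in (0:ℝ)..t,
        (f 0 * Real.exp ((1 - a) * s) + (1 + 1/a) * K * Real.exp s))
        = f 0 * J + (1 + 1/a) * K * (Real.exp t - 1) := by
      rw [intervalIntegral.integral_add, intervalIntegral.integral_const_mul,
        intervalIntegral.integral_const_mul, integral_exp]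
      · simp [hJdef]
      · exact Continuous.intervalIntegrable
          (continuous_const.mul (Real.continuous_exp.comp (continuous_const.mul continuous_id))) _ _
      · exact Continuous.intervalIntegrable (continuous_const.mul Real.continuous_exp) _ _
    rw [← hsplit]; exact hmono
  -- positivity facts
  have hG1pos : 0 ≤ G1 t := by
    apply intervalIntegral.integral_nonneg ht
    intro s hs
    exact mul_nonneg (Real.exp_pos s).le (hgpos s hs.1)
  have hJpos : 0 ≤ J := by
    apply intervalIntegral.integral_nonneg ht
    intro s _
    exact (Real.exp_pos _).le
  have hft : 0 ≤ f t := hfpos t ht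
  have hf0 : 0 ≤ f 0 := hfpos 0 le_rfl
  have het : 1 ≤ Real.exp t := Real.one_le_exp ht
  have hexpft : 0 ≤ Real.exp t * f t := mul_nonneg (Real.exp_pos t).le hft
  have hkey : 2 * d * G1 t ≤ f 0 + G2 t := by
    have : Real.exp t * f t + 2 * d * G1 t - G2 t ≤ f 0 := hHt
    linarith
  have hKa : 0 ≤ (1 + 1/a) * K := by positivity
  show d * G1 t ≤ (1 + 1/a) * K * Real.exp t + (1 + Real.exp t * J) * f 0
  nlinarith [mul_nonneg (sub_nonneg.2 het) (mul_nonneg hJpos hf0),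
    mul_nonneg hd.le hG1pos]
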